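/- Let q_1, ..., q_r be multiplicatively independent nonzero integers and let Y ≥ 1. If a prime p does not divide q_1⋯q_r and the subgroup of (ℤ/pℤ)^× generated by the reductions of q_1, ..., q_r has at most Y elements, then there exist integers e_1', ..., e_r', not all zero, with |e_i'| ≤ Y^{1/r} for all i, such that p divides the numerator of the nonzero rational number q_1^{e_1'}⋯q_r^{e_r'} − 1. -/

import Mathlib

/-- Nonzero integers `q 0, ..., q (r-1)` are multiplicatively independent:
`q 0 ^ e 0 * ⋯ * q (r-1) ^ e (r-1) = 1` with integer exponents forces all `e i = 0`. -/
def MultIndep {r : ℕ} (q : Fin r → ℤ) : Prop :=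
  ∀ e : Fin r → ℤ, (∏ i, (q i : ℚ) ^ (e i)) = 1 → e = 0

/-- The subgroup of `(ℤ/pℤ)ˣ` generated by the reductions of the `q i`. -/
def genSubgroup {r : ℕ} (q : Fin r → ℤ) (p : ℕ) : Subgroup (ZMod p)ˣ :=
  Subgroup.closure {x : (ZMod p)ˣ | ∃ i, (x : ZMod p) = ((q i : ℤ) : ZMod p)}

lemma num_dvd_aux (p : ℕ) (hp : p.Prime) (a b : ℤ) (hb0 : b ≠ 0)
    (hpb : ¬ (p : ℤ) ∣ b) (hpa : (p : ℤ) ∣ a) :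
    (p : ℤ) ∣ ((a : ℚ) / b).num := by
  set x : ℚ := (a : ℚ) / b with hx
  have hxb : x * b = a := div_mul_cancel₀ _ (by exact_mod_cast hb0)
  have hkey : (x.num : ℚ) * b = a * x.den := by
    have hden : (x.den : ℚ) ≠ 0 := by exact_mod_cast x.den_ne_zero
    have := Rat.num_div_den x
    calc (x.num : ℚ) * b = (x.num / x.den) * b * x.den := by field_simp
    _ = a * x.den := by rw [Rat.num_div_den, hxb]
  have hkey' : x.num * b = a * x.den := by exact_mod_cast hkey
  have hp' : Prime (p : ℤ) := Nat.prime_iff_prime_int.mp hp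
  have : (p : ℤ) ∣ x.num * b := by
    rw [hkey']; exact hpa.mul_right _
  rcases hp'.dvd_mul.mp this with h | h
  · exact h
  · exact absurd h hpb

theorem stmt0 {r : ℕ} (hr : 0 < r) (q : Fin r → ℤ) (hq : ∀ i, q i ≠ 0)
    (hind : MultIndep q) (Y : ℝ) (hY : 1 ≤ Y) (p : ℕ) (hp : p.Prime)
    (hpq : ¬ (p : ℤ) ∣ ∏ i, q i)
    (hcard : (Nat.card (genSubgroup q p) : ℝ) ≤ Y) :
    ∃ e' : Fin r → ℤ,
      e' ≠ 0 ∧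
      (∀ i, (|e' i| : ℝ) ≤ Y ^ ((r : ℝ)⁻¹)) ∧
      (∏ i, (q i : ℚ) ^ (e' i)) ≠ 1 ∧
      (p : ℤ) ∣ ((∏ i, (q i : ℚ) ^ (e' i)) - 1).num := by
  haveI : Fact p.Prime := ⟨hp⟩
  have hp' : Prime (p : ℤ) := Nat.prime_iff_prime_int.mp hp
  -- each q i is prime to p
  have hpq' : ∀ i, ¬ (p : ℤ) ∣ q i := by
    intro i h
    exact hpq (h.trans (Finset.dvd_prod_of_mem _ (Finset.mem_univ i)))
  have hu : ∀ i, IsUnit ((q i : ℤ) : ZMod p) := by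
    intro i
    refine Ne.isUnit ?_
    rw [Ne, ZMod.intCast_zmod_eq_zero_iff_dvd]
    exact hpq' i
  set u : Fin r → (ZMod p)ˣ := fun i => (hu i).unit with hu_def
  have huq : ∀ i, ((u i : (ZMod p)ˣ) : ZMod p) = ((q i : ℤ) : ZMod p) := fun i => (hu i).unit_spec
  have hu_mem : ∀ i, u i ∈ genSubgroup q p := fun i =>
    Subgroup.subset_closure ⟨i, huq i⟩
  -- the bound T
  set T : ℕ := ⌊Y ^ ((r : ℝ)⁻¹)⌋₊ with hT
  have hrpos : (0 : ℝ) < r := by exact_mod_cast hr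
  have hYpos : (0 : ℝ) < Y := lt_of_lt_of_le zero_lt_one hY
  have hYr_nonneg : (0 : ℝ) ≤ Y ^ ((r : ℝ)⁻¹) := Real.rpow_nonneg hYpos.le _
  have hYlt : Y < ((T + 1 : ℕ) : ℝ) ^ r := by
    have h1 : Y ^ ((r : ℝ)⁻¹) < (T : ℝ) + 1 := Nat.lt_floor_add_one _
    have h2 : (Y ^ ((r : ℝ)⁻¹)) ^ r < ((T : ℝ) + 1) ^ r :=
      pow_lt_pow_left₀ h1 hYr_nonneg hr.ne'
    have h3 : (Y ^ ((r : ℝ)⁻¹)) ^ r = Y := by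
      rw [← Real.rpow_natCast (Y ^ ((r : ℝ)⁻¹)) r, ← Real.rpow_mul hYpos.le,
        inv_mul_cancel₀ hrpos.ne', Real.rpow_one]
    rw [h3] at h2
    calc Y < ((T : ℝ) + 1) ^ r := h2
    _ = ((T + 1 : ℕ) : ℝ) ^ r := by push_cast; ring
  -- pigeonhole
  have hcard_lt : Nat.card (genSubgroup q p) < Nat.card (Fin r → Fin (T + 1)) := by
    have : (Nat.card (genSubgroup q p) : ℝ) < ((T + 1 : ℕ) : ℝ) ^ r :=
      lt_of_le_of_lt hcard hYlt
    have h4 : Nat.card (Fin r → Fin (T + 1)) = (T + 1) ^ r := by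
      simp [Nat.card_eq_fintype_card]
    rw [h4]
    exact_mod_cast this
  haveI : Fintype (genSubgroup q p) := Fintype.ofFinite _
  set F : (Fin r → Fin (T + 1)) → (genSubgroup q p) := fun a =>
    ⟨∏ i, (u i) ^ (a i : ℕ), Subgroup.prod_mem _ (fun i _ => Subgroup.pow_mem _ (hu_mem i) _)⟩
    with hF
  obtain ⟨a, b, hab, hFab⟩ := Fintype.exists_ne_map_eq_of_card_lt F (by
    rw [← Nat.card_eq_fintype_card, ← Nat.card_eq_fintype_card]; exact hcard_lt)
  have hFab' : ∏ i, (u i) ^ (a i : ℕ) = ∏ i, (u i) ^ (b i : ℕ) := by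
    have := Subtype.ext_iff.mp hFab
    simpa [hF] using this
  -- the exponent vector
  set e' : Fin r → ℤ := fun i => (a i : ℤ) - (b i : ℤ) with he'
  have he'ne : e' ≠ 0 := by
    intro h
    apply hab
    funext i
    have : e' i = 0 := by rw [h]; rfl
    have : (a i : ℤ) = (b i : ℤ) := by simpa [he', sub_eq_zero] using this
    have : (a i : ℕ) = (b i : ℕ) := by exact_mod_cast this
    exact Fin.ext this
  have habs : ∀ i, (|e' i| : ℝ) ≤ Y ^ ((r : ℝ)⁻¹) := by
    intro i
    have ha : (a i : ℕ) ≤ T := Nat.lt_succ_iff.mp (a i).isLt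
    have hb : (b i : ℕ) ≤ T := Nat.lt_succ_iff.mp (b i).isLt
    have haz : ((a i : ℕ) : ℤ) ≤ (T : ℤ) := by exact_mod_cast ha
    have hbz : ((b i : ℕ) : ℤ) ≤ (T : ℤ) := by exact_mod_cast hb
    have h1 : |e' i| ≤ (T : ℤ) := by
      simp only [he']
      rw [abs_le]
      omega
    have h2 : ((T : ℤ) : ℝ) ≤ Y ^ ((r : ℝ)⁻¹) := by
      push_cast
      exact Nat.floor_le hYr_nonneg
    calc (|e' i| : ℝ) ≤ ((T : ℤ) : ℝ) := by exact_mod_cast h1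
    _ ≤ _ := h2
  -- product of units is 1
  have hunit1 : ∏ i, (u i) ^ (e' i) = 1 := by
    have : ∏ i, (u i) ^ (e' i)
        = (∏ i, (u i) ^ (a i : ℕ)) * (∏ i, (u i) ^ (b i : ℕ))⁻¹ := by
      rw [← Finset.prod_inv_distrib, ← Finset.prod_mul_distrib]
      refine Finset.prod_congr rfl (fun i _ => ?_)
      rw [he']
      rw [zpow_sub, zpow_natCast, zpow_natCast]
    rw [this, hFab', mul_inv_cancel]
  -- product of rationals not 1
  have hne1 : (∏ i, (q i : ℚ) ^ (e' i)) ≠ 1 := fun h => he'ne (hind e' h)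
  -- integers A B
  set A : ℤ := ∏ i, (q i) ^ (e' i).toNat with hA
  set B : ℤ := ∏ i, (q i) ^ (-(e' i)).toNat with hB
  have hB0 : B ≠ 0 := Finset.prod_ne_zero_iff.mpr (fun i _ => pow_ne_zero _ (hq i))
  have hpB : ¬ (p : ℤ) ∣ B := by
    intro h
    rw [hB] at h
    rcases hp'.dvd_finset_prod_iff _ |>.mp h with ⟨i, _, hi⟩
    exact hpq' i (hp'.dvd_of_dvd_pow hi)
  -- X = A / B
  have hsplit : ∀ (e : ℤ) (i : Fin r),
      (q i : ℚ) ^ e = (q i : ℚ) ^ e.toNat / (q i : ℚ) ^ (-e).toNat := by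
    intro e i
    have hq' : (q i : ℚ) ≠ 0 := by exact_mod_cast hq i
    have h1 : (q i : ℚ) ^ e = (q i : ℚ) ^ ((e.toNat : ℤ)) / (q i : ℚ) ^ (((-e).toNat : ℤ)) := by
      rw [← zpow_sub₀ hq']
      congr 1
      omega
    rw [h1, zpow_natCast, zpow_natCast]
  have hX : (∏ i, (q i : ℚ) ^ (e' i)) = (A : ℚ) / (B : ℚ) := by
    rw [hA, hB]
    push_cast
    rw [← Finset.prod_div_distrib]
    exact Finset.prod_congr rfl (fun i _ => hsplit (e' i) i)
  -- p divides A - B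
  have hABu : ∏ i, (u i) ^ ((e' i).toNat) = ∏ i, (u i) ^ ((-(e' i)).toNat) := by
    have h := hunit1
    have h2 : ∏ i, (u i) ^ (e' i)
        = (∏ i, (u i) ^ ((e' i).toNat)) * (∏ i, (u i) ^ ((-(e' i)).toNat))⁻¹ := by
      rw [← Finset.prod_inv_distrib, ← Finset.prod_mul_distrib]
      refine Finset.prod_congr rfl (fun i _ => ?_)
      rw [← zpow_natCast (u i) (e' i).toNat, ← zpow_natCast (u i) (-(e' i)).toNat,
        ← zpow_sub]
      congr 1
      omega
    rw [h2] at h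
    exact mul_inv_eq_one.mp h
  have hZ : ((A : ℤ) : ZMod p) = ((B : ℤ) : ZMod p) := by
    have h3 := congrArg (Units.coeHom (ZMod p)) hABu
    simp only [map_prod, map_pow, Units.coeHom_apply, huq] at h3
    rw [hA, hB]
    push_cast
    exact h3
  have hAB : (p : ℤ) ∣ A - B := by
    rw [← ZMod.intCast_zmod_eq_zero_iff_dvd]
    push_cast
    rw [sub_eq_zero]
    exact_mod_cast hZ
  refine ⟨e', he'ne, habs, hne1, ?_⟩
  have hfinal : (∏ i, (q i : ℚ) ^ (e' i)) - 1 = ((A - B : ℤ) : ℚ) / (B : ℤ) := by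
    rw [hX]
    have hB0' : ((B : ℤ) : ℚ) ≠ 0 := by exact_mod_cast hB0
    field_simp
    exact (Int.cast_sub A B).symm
  rw [hfinal]
  exact num_dvd_aux p hp _ _ hB0 hpB hAB
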